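/- Let 𝔤₊ and 𝔥' be Lagrangian subspaces of 𝔤. Then the orthogonal complement of the subspace 𝔤₊ ⊗ 𝔤₊ + 𝔤 ⊗ 𝔥' + 𝔥' ⊗ 𝔤 of 𝔤 ⊗ 𝔤, taken with respect to the bilinear form ⟨,⟩ ⊗ ⟨,⟩, is equal to (𝔤₊ ∩ 𝔥') ⊗ 𝔥' + 𝔥' ⊗ (𝔤₊ ∩ 𝔥'). -/

import Mathlib

open TensorProduct

variable (k : Type*) [Field k]
variable (g : Type*) [AddCommGroup g] [Module k g]

/-- The subspace `U ⊗ V` of `g ⊗ g` spanned by elementary tensors `u ⊗ v`, `u ∈ U`, `v ∈ V`. -/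
def tsub (U V : Submodule k g) : Submodule k (g ⊗[k] g) :=
  Submodule.span k {z | ∃ u ∈ U, ∃ v ∈ V, z = u ⊗ₜ[k] v}

/-- A subspace is Lagrangian when it equals its own orthogonal complement. -/
def IsLagrangian (B : g →ₗ[k] g →ₗ[k] k) (W : Submodule k g) : Prop :=
  ∀ x : g, x ∈ W ↔ ∀ w ∈ W, B w x = 0

/-- The contraction `(⟨x,·⟩ ⊗ id)(t)` of a 2-tensor against `x` in the first factor. -/
noncomputable def contractFst (B : g →ₗ[k] g →ₗ[k] k) (x : g) : g ⊗[k] g →ₗ[k] g :=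
  (TensorProduct.lid k g).toLinearMap ∘ₗ TensorProduct.map (B x) LinearMap.id

open Submodule Set LinearMap Module

section AuxGeneric
variable {k} {M : Type*} [AddCommGroup M] [Module k M]

lemma aux_mem_orthogonal_span (T : LinearMap.BilinForm k M) (s : Set M) (z : M) :
    z ∈ LinearMap.BilinForm.orthogonal T (Submodule.span k s) ↔ ∀ w ∈ s, T w z = 0 := by
  constructor
  · exact fun h w hw => h w (Submodule.subset_span hw)
  · intro h w hw
    induction hw using Submodule.span_induction with
    | mem x hx => exact h x hx
    | zero => simp [LinearMap.BilinForm.IsOrtho]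
    | add x y _ _ hx hy =>
        show T (x + y) z = 0
        rw [map_add, LinearMap.add_apply, hx, hy, add_zero]
    | smul c x _ hx =>
        show T (c • x) z = 0
        rw [map_smul, LinearMap.smul_apply, hx, smul_zero]

lemma aux_orthogonal_sup (T : LinearMap.BilinForm k M) (X Y : Submodule k M) :
    LinearMap.BilinForm.orthogonal T (X ⊔ Y) =
      LinearMap.BilinForm.orthogonal T X ⊓ LinearMap.BilinForm.orthogonal T Y := by
  ext z
  simp only [Submodule.mem_inf]
  constructor
  · exact fun h => ⟨fun n hn => h n (Submodule.mem_sup_left hn),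
      fun n hn => h n (Submodule.mem_sup_right hn)⟩
  · rintro ⟨h1, h2⟩ n hn
    obtain ⟨x, hx, y, hy, rfl⟩ := Submodule.mem_sup.1 hn
    show T (x + y) z = 0
    rw [map_add, LinearMap.add_apply, h1 x hx, h2 y hy, add_zero]

lemma aux_span_image_inf {I : Type*} (b : Basis I k M) (s t : Set I) :
    Submodule.span k (b '' s) ⊓ Submodule.span k (b '' t) = Submodule.span k (b '' (s ∩ t)) := by
  ext x
  simp only [Submodule.mem_inf, Basis.mem_span_image, Set.subset_inter_iff]

end AuxGeneric

section AuxG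
variable {k g}
lemma aux_tsub_def (U V : Submodule k g) :
    tsub k g U V = Submodule.span k {z | ∃ u ∈ U, ∃ v ∈ V, z = u ⊗ₜ[k] v} := rfl

lemma aux_tmul_mem_tsub {U V : Submodule k g} {u v : g} (hu : u ∈ U) (hv : v ∈ V) :
    u ⊗ₜ[k] v ∈ tsub k g U V := Submodule.subset_span ⟨u, hu, v, hv, rfl⟩

lemma aux_tsub_span {I : Type*} (b : Basis I k g) (s t : Set I) :
    tsub k g (Submodule.span k (b '' s)) (Submodule.span k (b '' t)) =
      Submodule.span k ((b.tensorProduct b) '' (s ×ˢ t)) := by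
  apply le_antisymm
  · rw [aux_tsub_def, Submodule.span_le]
    rintro z ⟨u, hu, v, hv, rfl⟩
    have h1 : ∀ i ∈ s, ∀ v' ∈ Submodule.span k (b '' t),
        (b i) ⊗ₜ[k] v' ∈ Submodule.span k ((b.tensorProduct b) '' (s ×ˢ t)) := by
      intro i hi v' hv'
      induction hv' using Submodule.span_induction with
      | mem y hy =>
          obtain ⟨j, hj, rfl⟩ := hy
          exact Submodule.subset_span ⟨(i, j), ⟨hi, hj⟩, Module.Basis.tensorProduct_apply b b i j⟩
      | zero => rw [tmul_zero]; exact Submodule.zero_mem _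
      | add x y _ _ hx hy => rw [tmul_add]; exact Submodule.add_mem _ hx hy
      | smul c x _ hx => rw [tmul_smul]; exact Submodule.smul_mem _ _ hx
    induction hu using Submodule.span_induction with
    | mem x hx =>
        obtain ⟨i, hi, rfl⟩ := hx
        exact h1 i hi v hv
    | zero => rw [zero_tmul]; exact Submodule.zero_mem _
    | add x y _ _ hx hy => rw [add_tmul]; exact Submodule.add_mem _ hx hy
    | smul c x _ hx => rw [← smul_tmul']; exact Submodule.smul_mem _ _ hx
  · rw [Submodule.span_le]
    rintro z ⟨⟨i, j⟩, ⟨hi, hj⟩, rfl⟩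
    rw [Module.Basis.tensorProduct_apply]
    exact aux_tmul_mem_tsub (Submodule.subset_span ⟨i, hi, rfl⟩)
      (Submodule.subset_span ⟨j, hj, rfl⟩)

lemma aux_tsub_top_top : tsub k g ⊤ ⊤ = (⊤ : Submodule k (g ⊗[k] g)) := by
  rw [aux_tsub_def, ← TensorProduct.span_tmul_eq_top k g g]
  congr 1
  ext z
  constructor
  · rintro ⟨u, -, v, -, rfl⟩; exact ⟨u, v, rfl⟩
  · rintro ⟨u, v, rfl⟩; exact ⟨u, trivial, v, trivial, rfl⟩

lemma aux_tsub_bot_left : tsub k g ⊥ ⊤ = (⊥ : Submodule k (g ⊗[k] g)) := by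
  rw [aux_tsub_def]
  apply le_antisymm _ bot_le
  rw [Submodule.span_le]
  rintro z ⟨u, hu, v, -, rfl⟩
  rw [Submodule.mem_bot] at hu
  simp [hu]

lemma aux_tsub_bot_right : tsub k g ⊤ ⊥ = (⊥ : Submodule k (g ⊗[k] g)) := by
  rw [aux_tsub_def]
  apply le_antisymm _ bot_le
  rw [Submodule.span_le]
  rintro z ⟨u, -, v, hv, rfl⟩
  rw [Submodule.mem_bot] at hv
  simp [hv]

lemma aux_range_lTensor (W : Submodule k g) :
    LinearMap.range (LinearMap.lTensor g W.subtype) = tsub k g ⊤ W := by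
  have h : LinearMap.lTensor g W.subtype = TensorProduct.map LinearMap.id W.subtype := rfl
  rw [h, TensorProduct.range_map_eq_span_tmul, aux_tsub_def]
  congr 1
  ext z
  constructor
  · rintro ⟨m, n, rfl⟩; exact ⟨m, trivial, ↑n, n.2, rfl⟩
  · rintro ⟨u, -, v, hv, rfl⟩; exact ⟨u, ⟨v, hv⟩, rfl⟩

lemma aux_range_rTensor (W : Submodule k g) :
    LinearMap.range (LinearMap.rTensor g W.subtype) = tsub k g W ⊤ := by
  have h : LinearMap.rTensor g W.subtype = TensorProduct.map W.subtype LinearMap.id := rfl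
  rw [h, TensorProduct.range_map_eq_span_tmul, aux_tsub_def]
  congr 1
  ext z
  constructor
  · rintro ⟨m, n, rfl⟩; exact ⟨↑m, m.2, n, trivial, rfl⟩
  · rintro ⟨u, hu, v, -, rfl⟩; exact ⟨⟨u, hu⟩, v, rfl⟩

end AuxG

section Adapted
variable {k g}

lemma exists_adapted_basis (A H : Submodule k g) :
    ∃ (sT : Set g) (b : Basis sT k g) (sa sh : Set sT),
      Submodule.span k (b '' sa) = A ∧ Submodule.span k (b '' sh) = H := by
  classical
  obtain ⟨sD, hsD_sub, hsD_span, hsD_li⟩ := exists_linearIndependent k ((A ⊓ H : Submodule k g) : Set g)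
  rw [Submodule.span_eq] at hsD_span
  obtain ⟨sA, hsA_sub, hDA, hA_le, hsA_li⟩ : ∃ b ⊆ ((A : Submodule k g) : Set g), sD ⊆ b ∧
      ((A : Submodule k g) : Set g) ⊆ Submodule.span k b ∧ LinearIndependent k ((↑) : b → g) :=
    exists_linearIndepOn_id_extension hsD_li (fun x hx => (hsD_sub hx).1)
  obtain ⟨sH, hsH_sub, hDH, hH_le, hsH_li⟩ : ∃ b ⊆ ((H : Submodule k g) : Set g), sD ⊆ b ∧
      ((H : Submodule k g) : Set g) ⊆ Submodule.span k b ∧ LinearIndependent k ((↑) : b → g) :=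
    exists_linearIndepOn_id_extension hsD_li (fun x hx => (hsD_sub hx).2)
  have hA_span : Submodule.span k sA = A :=
    le_antisymm (Submodule.span_le.2 hsA_sub) (fun x hx => hA_le hx)
  have hH_span : Submodule.span k sH = H :=
    le_antisymm (Submodule.span_le.2 hsH_sub) (fun x hx => hH_le hx)
  -- disjointness of span sA and span (sH \ sD)
  have hdisj : Disjoint (Submodule.span k sA) (Submodule.span k (sH \ sD)) := by
    rw [Submodule.disjoint_def]
    intro x hxA hxH
    have hx1 : x ∈ A ⊓ H := by
      constructor
      · rw [← hA_span]; exact hxA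
      · rw [← hH_span]; exact Submodule.span_mono Set.diff_subset hxH
    have hx2 : x ∈ Submodule.span k sD := by rw [hsD_span]; exact hx1
    have hd : Disjoint (Submodule.span k ((fun y : sH => (y : g)) '' {y : sH | (y : g) ∈ sD}))
        (Submodule.span k ((fun y : sH => (y : g)) '' {y : sH | (y : g) ∈ sD}ᶜ)) :=
      hsH_li.disjoint_span_image disjoint_compl_right
    have him1 : (fun y : sH => (y : g)) '' {y : sH | (y : g) ∈ sD} = sD := by
      ext t
      constructor
      · rintro ⟨⟨t, htH⟩, hts, rfl⟩; exact hts
      · intro ht; exact ⟨⟨t, hDH ht⟩, ht, rfl⟩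
    have him2 : (fun y : sH => (y : g)) '' {y : sH | (y : g) ∈ sD}ᶜ = sH \ sD := by
      ext t
      constructor
      · rintro ⟨⟨t, htH⟩, hts, rfl⟩; exact ⟨htH, hts⟩
      · rintro ⟨htH, htD⟩; exact ⟨⟨t, htH⟩, htD, rfl⟩
    rw [him1, him2] at hd
    exact Submodule.disjoint_def.mp hd x hx2 hxH
  have hUeq : sA ∪ (sH \ sD) = sA ∪ sH := by
    ext x
    simp only [Set.mem_union, Set.mem_diff]
    constructor
    · tauto
    · rintro (h | h)
      · exact Or.inl h
      · by_cases hd : x ∈ sD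
        · exact Or.inl (hDA hd)
        · exact Or.inr ⟨h, hd⟩
  have hU_li : LinearIndependent k ((↑) : ↥(sA ∪ sH) → g) := by
    rw [← hUeq]
    exact LinearIndepOn.id_union hsA_li (LinearIndepOn.mono hsH_li Set.diff_subset) hdisj
  obtain ⟨sT, -, hUsub, hTsp, hsT_li⟩ : ∃ b ⊆ (Set.univ : Set g), sA ∪ sH ⊆ b ∧
      (Set.univ : Set g) ⊆ Submodule.span k b ∧ LinearIndependent k ((↑) : b → g) :=
    exists_linearIndepOn_id_extension hU_li (Set.subset_univ _)
  have hTtop : Submodule.span k sT = ⊤ := eq_top_iff.mpr fun x _ => hTsp trivial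
  let b : Basis sT k g := Basis.mk hsT_li (by rw [Subtype.range_coe]; exact hTtop.ge)
  have himg : ∀ X : Set g, X ⊆ sT → b '' {i : sT | (i : g) ∈ X} = X := by
    intro X hX
    ext y
    constructor
    · rintro ⟨i, hi, rfl⟩
      simpa [b, Basis.coe_mk] using hi
    · intro hy
      exact ⟨⟨y, hX hy⟩, hy, by simp [b, Basis.coe_mk]⟩
  refine ⟨sT, b, {i : sT | (i : g) ∈ sA}, {i : sT | (i : g) ∈ sH}, ?_, ?_⟩
  · rw [himg sA (fun x hx => hUsub (Or.inl hx)), hA_span]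
  · rw [himg sH (fun x hx => hUsub (Or.inr hx)), hH_span]

end Adapted

section Orth
variable {k g} [FiniteDimensional k g]

set_option synthInstance.maxHeartbeats 1000000 in
set_option maxHeartbeats 1000000 in
lemma aux_orth_tsub (B : g →ₗ[k] g →ₗ[k] k)
    (hsymm : ∀ x y : g, B x y = B y x)
    (hnondeg : ∀ x : g, (∀ y : g, B x y = 0) → x = 0)
    (U V : Submodule k g) :
    LinearMap.BilinForm.orthogonal (LinearMap.BilinForm.tmul B B) (tsub k g U V) =
      tsub k g ⊤ (LinearMap.BilinForm.orthogonal B V) ⊔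
        tsub k g (LinearMap.BilinForm.orthogonal B U) ⊤ := by
  classical
  -- the two projection maps
  let πU : g →ₗ[k] Module.Dual k U := U.subtype.dualMap ∘ₗ B
  let πV : g →ₗ[k] Module.Dual k V := V.subtype.dualMap ∘ₗ B
  have hBinj : Function.Injective B := by
    intro x y hxy
    have h0 : x - y = 0 := hnondeg (x - y)
      (fun z => by rw [map_sub, LinearMap.sub_apply, hxy, sub_self])
    exact sub_eq_zero.mp h0
  have hBsurj : Function.Surjective B :=
    (LinearMap.injective_iff_surjective_of_finrank_eq_finrank
      (Subspace.dual_finrank_eq).symm).mp hBinj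
  have hsurj : ∀ W : Submodule k g, Function.Surjective (W.subtype.dualMap ∘ₗ B) := by
    intro W φ
    obtain ⟨ψ, hψ⟩ := LinearMap.dualMap_surjective_of_injective W.injective_subtype φ
    obtain ⟨x, hx⟩ := hBsurj ψ
    exact ⟨x, by simp [LinearMap.comp_apply, hx, hψ]⟩
  have hkerU : LinearMap.ker πU = LinearMap.BilinForm.orthogonal B U := by
    ext x
    constructor
    · intro hx n hn
      have h := LinearMap.congr_fun (LinearMap.mem_ker.mp hx) ⟨n, hn⟩
      show B n x = 0
      rw [hsymm n x]
      exact h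
    · intro hx
      apply LinearMap.mem_ker.mpr
      ext ⟨n, hn⟩
      show B x n = 0
      rw [hsymm x n]
      exact hx n hn
  have hkerV : LinearMap.ker πV = LinearMap.BilinForm.orthogonal B V := by
    ext x
    constructor
    · intro hx n hn
      have h := LinearMap.congr_fun (LinearMap.mem_ker.mp hx) ⟨n, hn⟩
      show B n x = 0
      rw [hsymm n x]
      exact h
    · intro hx
      apply LinearMap.mem_ker.mpr
      ext ⟨n, hn⟩
      show B x n = 0
      rw [hsymm x n]
      exact hx n hn
  have hker : LinearMap.ker (TensorProduct.map πU πV) =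
      LinearMap.range (LinearMap.lTensor g (LinearMap.ker πV).subtype) ⊔
        LinearMap.range (LinearMap.rTensor g (LinearMap.ker πU).subtype) :=
    TensorProduct.map_ker (LinearMap.exact_subtype_ker_map πU) (hsurj U)
      (LinearMap.exact_subtype_ker_map πV) (hsurj V)
  have hDD : Function.Injective (TensorProduct.dualDistrib k ↥U ↥V) := by
    have h : ⇑(TensorProduct.dualDistrib k ↥U ↥V) =
        ⇑(TensorProduct.dualDistribEquivOfBasis (Module.Free.chooseBasis k ↥U)
          (Module.Free.chooseBasis k ↥V)) := rfl
    rw [h]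
    exact (TensorProduct.dualDistribEquivOfBasis _ _).injective
  ext z
  rw [← hkerU, ← hkerV, ← aux_range_lTensor, ← aux_range_rTensor, ← hker,
    aux_tsub_def, aux_mem_orthogonal_span, LinearMap.mem_ker]
  have key : ∀ (u : U) (v : V),
      (TensorProduct.dualDistrib k ↥U ↥V) (TensorProduct.map πU πV z) (u ⊗ₜ[k] v) =
        (LinearMap.BilinForm.tmul B B) ((u : g) ⊗ₜ[k] (v : g)) z := by
    intro u v
    induction z using TensorProduct.induction_on with
    | zero => simp
    | tmul x y =>
        simp only [TensorProduct.map_tmul, TensorProduct.dualDistrib_apply]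
        have hL : πU x u = B x u := rfl
        have hR : πV y v = B y v := rfl
        rw [hL, hR]
        rw [LinearMap.BilinForm.tmul, LinearMap.BilinForm.tensorDistrib_tmul]
        rw [hsymm x u, hsymm y v, smul_eq_mul, mul_comm]
    | add z1 z2 h1 h2 =>
        simp only [map_add, LinearMap.add_apply, h1, h2]
  constructor
  · intro h
    apply hDD
    rw [map_zero]
    apply TensorProduct.ext'
    intro u v
    rw [key u v, LinearMap.zero_apply]
    exact h _ ⟨u, u.2, v, v.2, rfl⟩
  · rintro h w ⟨u, hu, v, hv, rfl⟩
    have hk := key ⟨u, hu⟩ ⟨v, hv⟩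
    rw [h, map_zero, LinearMap.zero_apply] at hk
    exact hk.symm

end Orth

theorem stmt3 [FiniteDimensional k g] (B : g →ₗ[k] g →ₗ[k] k)
    (hsymm : ∀ x y : g, B x y = B y x)
    (hnondeg : ∀ x : g, (∀ y : g, B x y = 0) → x = 0)
    -- `𝔤₊` and `𝔥'` Lagrangian subspaces
    (gp H' : Submodule k g) (hgp : IsLagrangian k g B gp) (hH' : IsLagrangian k g B H') :
    -- the orthogonal complement of `𝔤₊ ⊗ 𝔤₊ + 𝔤 ⊗ 𝔥' + 𝔥' ⊗ 𝔤` w.r.t. `⟨,⟩ ⊗ ⟨,⟩`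
    -- equals `(𝔤₊ ∩ 𝔥') ⊗ 𝔥' + 𝔥' ⊗ (𝔤₊ ∩ 𝔥')`
    {z : g ⊗[k] g |
        ∀ w ∈ (tsub k g gp gp ⊔ tsub k g ⊤ H' ⊔ tsub k g H' ⊤ : Submodule k (g ⊗[k] g)),
          LinearMap.BilinForm.tmul B B w z = 0} =
      ((tsub k g (gp ⊓ H') H' ⊔ tsub k g H' (gp ⊓ H') : Submodule k (g ⊗[k] g)) :
        Set (g ⊗[k] g)) := by
  classical
  have hBrefl : LinearMap.IsRefl B := fun x y h => by rw [hsymm]; exact h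
  have hBnd : LinearMap.BilinForm.Nondegenerate B := ⟨fun x h => hnondeg x h,
    fun y h => hnondeg y (fun x => by rw [hsymm]; exact h x)⟩
  have horthgp : LinearMap.BilinForm.orthogonal B gp = gp := by
    ext x; exact (hgp x).symm
  have horthH' : LinearMap.BilinForm.orthogonal B H' = H' := by
    ext x; exact (hH' x).symm
  have horthtop : LinearMap.BilinForm.orthogonal B ⊤ = ⊥ := by
    ext x
    simp only [Submodule.mem_bot]
    constructor
    · intro h
      exact hnondeg x (fun y => by rw [hsymm]; exact h y trivial)
    · rintro rfl n -
      show B n 0 = 0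
      simp
  have horthD : LinearMap.BilinForm.orthogonal B (gp ⊓ H') = gp ⊔ H' := by
    have h1 : gp ⊓ H' = LinearMap.BilinForm.orthogonal B (gp ⊔ H') := by
      rw [aux_orthogonal_sup, horthgp, horthH']
    rw [h1, LinearMap.BilinForm.orthogonal_orthogonal hBnd hBrefl]
  have hTsymm : LinearMap.IsSymm (LinearMap.BilinForm.tmul B B) :=
    LinearMap.IsSymm.tmul ⟨fun x y => hsymm x y⟩ ⟨fun x y => hsymm x y⟩
  have hTrefl : LinearMap.IsRefl (LinearMap.BilinForm.tmul B B) := hTsymm.isRefl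
  have hTnd : LinearMap.BilinForm.Nondegenerate (LinearMap.BilinForm.tmul B B) := by
    suffices hL : LinearMap.SeparatingLeft (LinearMap.BilinForm.tmul B B) from
      ⟨hL, fun z hz => hL z (fun w => (hTsymm.eq z w).trans (hz w))⟩
    intro z hz
    have hz' : z ∈ LinearMap.BilinForm.orthogonal (LinearMap.BilinForm.tmul B B)
        (tsub k g ⊤ ⊤) := by
      intro w _
      exact (hTsymm.eq w z).trans (hz w)
    rw [aux_orth_tsub B hsymm hnondeg, horthtop, aux_tsub_bot_right, aux_tsub_bot_left,
      sup_idem] at hz'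
    simpa using hz'
  have hS_eq : (tsub k g gp gp ⊔ tsub k g ⊤ H' ⊔ tsub k g H' ⊤) =
      LinearMap.BilinForm.orthogonal (LinearMap.BilinForm.tmul B B)
        (tsub k g (gp ⊓ H') H' ⊔ tsub k g H' (gp ⊓ H')) := by
    rw [aux_orthogonal_sup, aux_orth_tsub B hsymm hnondeg, aux_orth_tsub B hsymm hnondeg,
      horthH', horthD]
    obtain ⟨sT, b, sa, sh, hA, hH⟩ := exists_adapted_basis gp H'
    have hSup : Submodule.span k (⇑b '' (sa ∪ sh)) = gp ⊔ H' := by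
      rw [Set.image_union, Submodule.span_union, hA, hH]
    have hTop : Submodule.span k (⇑b '' (Set.univ : Set sT)) = ⊤ := by
      rw [Set.image_univ, Basis.span_eq]
    rw [← hSup, ← hA, ← hH, ← hTop]
    simp only [aux_tsub_span]
    simp only [← Submodule.span_union, ← Set.image_union]
    rw [aux_span_image_inf]
    refine congrArg (Submodule.span k) (congrArg (Set.image ⇑(b.tensorProduct b)) ?_)
    ext ⟨i, j⟩
    simp only [Set.mem_union, Set.mem_inter_iff, Set.mem_prod, Set.mem_univ, true_and,
      and_true]
    tauto
  have hfinal : LinearMap.BilinForm.orthogonal (LinearMap.BilinForm.tmul B B)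
      (tsub k g gp gp ⊔ tsub k g ⊤ H' ⊔ tsub k g H' ⊤) =
      tsub k g (gp ⊓ H') H' ⊔ tsub k g H' (gp ⊓ H') := by
    rw [hS_eq, LinearMap.BilinForm.orthogonal_orthogonal hTnd hTrefl]
  show ((LinearMap.BilinForm.orthogonal (LinearMap.BilinForm.tmul B B)
      (tsub k g gp gp ⊔ tsub k g ⊤ H' ⊔ tsub k g H' ⊤) : Submodule k (g ⊗[k] g)) :
        Set (g ⊗[k] g)) = _
  rw [hfinal]
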